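/- arXiv:2310.15056 — 4 statements merged into one kernel-verified Lean document; each statement's English description precedes it below -/
import Mathlib

section
/- Let W ∈ ℂ and let K ⊂ ℝ be a compact set. There exist constants C > 0 and M > 0 such that for all real τ ≥ M and all δ ∈ K with δ ≠ Im W, one has |√(W − τ − iδ) − sgn(Im W − δ)·(i·√τ + ((Im W − δ) − i·Re W)/(2√τ))| ≤ C·τ^(−3/2). -/
/-- The principal branch of the complex square root,
holomorphic on `ℂ ∖ (−∞,0]` and positive on `(0,+∞)`. -/
noncomputable def csqrt (z : ℂ) : ℂ := z ^ (1 / 2 : ℂ)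

lemma csqrt_mul_self {z : ℂ} (hz : z ≠ 0) : csqrt z * csqrt z = z := by
  rw [csqrt, ← Complex.cpow_add _ _ hz]
  norm_num

lemma csqrt_im_nonneg {z : ℂ} (hz : 0 ≤ z.im) : 0 ≤ (csqrt z).im := by
  rcases eq_or_ne z 0 with rfl | hz0
  · simp [csqrt, Complex.zero_cpow (by norm_num : (1/2:ℂ) ≠ 0)]
  · rw [csqrt, Complex.cpow_def_of_ne_zero hz0, Complex.exp_im]
    apply mul_nonneg (Real.exp_pos _).le
    have him : (Complex.log z * (1/2)).im = Complex.arg z / 2 := by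
      simp [Complex.mul_im, Complex.log_im]
      ring
    rw [him]
    apply Real.sin_nonneg_of_nonneg_of_le_pi
    · have := Complex.arg_nonneg_iff.mpr hz
      linarith
    · have := Complex.arg_le_pi z
      have := Real.pi_pos
      linarith

lemma csqrt_im_nonpos {z : ℂ} (hz : z.im < 0) : (csqrt z).im ≤ 0 := by
  have hz0 : z ≠ 0 := fun h => by simp [h] at hz
  rw [csqrt, Complex.cpow_def_of_ne_zero hz0, Complex.exp_im]
  apply mul_nonpos_of_nonneg_of_nonpos (Real.exp_pos _).le
  have him : (Complex.log z * (1/2)).im = Complex.arg z / 2 := by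
    simp [Complex.mul_im, Complex.log_im]
    ring
  rw [him]
  have h1 : Complex.arg z < 0 := Complex.arg_neg_iff.mpr hz
  have h2 := Complex.neg_pi_lt_arg z
  have := Real.pi_pos
  have h3 : Real.sin (-(Complex.arg z / 2)) ≥ 0 := by
    apply Real.sin_nonneg_of_nonneg_of_le_pi <;> linarith
  rw [Real.sin_neg] at h3
  linarith

/-- Asymptotic expansion of `√(W − τ − iδ)` as `τ → +∞`, uniformly for `δ` in a
compact set `K` with `δ ≠ Im W`. -/
theorem stmt1 (W : ℂ) (K : Set ℝ) (hK : IsCompact K) :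
    ∃ C M : ℝ, 0 < C ∧ 0 < M ∧ ∀ τ : ℝ, M ≤ τ → ∀ δ ∈ K, δ ≠ W.im →
      ‖csqrt (W - τ - Complex.I * δ)
          - ((Real.sign (W.im - δ) : ℝ) : ℂ) *
            (Complex.I * (Real.sqrt τ : ℂ)
              + (((W.im - δ : ℝ) : ℂ) - Complex.I * (W.re : ℂ)) / (2 * (Real.sqrt τ : ℂ)))‖
        ≤ C * τ ^ ((-3 : ℝ) / 2) := by
  obtain ⟨r, hr⟩ := hK.isBounded.subset_closedBall (0:ℝ)
  set A : ℝ := |W.re| + |W.im| + |r| + 1 with hA_def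
  have hA : 0 < A := by positivity
  refine ⟨A^2, A + 1, by positivity, by positivity, ?_⟩
  intro τ hτ δ hδK hδ
  have hδr : |δ| ≤ r := by
    have := hr hδK
    simpa [Metric.mem_closedBall, Real.dist_eq] using this
  set a : ℝ := W.re with ha_def
  set b : ℝ := W.im - δ with hb_def
  have hb : b ≠ 0 := sub_ne_zero_of_ne (Ne.symm hδ)
  have haA : |a| ≤ A := by
    have : (0:ℝ) ≤ |W.im| + |r| + 1 := by positivity
    simp only [hA_def, ha_def]; linarith
  have hbA : |b| ≤ A := by
    have h1 : |b| ≤ |W.im| + |δ| := abs_sub W.im δ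
    have h2 : |δ| ≤ |r| := le_trans hδr (le_abs_self r)
    have : (0:ℝ) ≤ |W.re| := abs_nonneg _
    simp only [hA_def]; linarith
  have hτ0 : (0:ℝ) < τ := lt_of_lt_of_le (by linarith) hτ
  have hsτ : (0:ℝ) < Real.sqrt τ := Real.sqrt_pos.mpr hτ0
  have hss : Real.sqrt τ * Real.sqrt τ = τ := Real.mul_self_sqrt hτ0.le
  set z : ℂ := W - τ - Complex.I * δ with hz_def
  have hzim : z.im = b := by simp [hz_def, hb_def]
  have hz0 : z ≠ 0 := by
    intro h; apply hb; rw [← hzim, h]; simp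
  set s : ℂ := csqrt z with hs_def
  have hs2 : s * s = z := csqrt_mul_self hz0
  set σ : ℝ := Real.sign b with hσ_def
  have hσcases : (0 < b ∧ σ = 1) ∨ (b < 0 ∧ σ = -1) := by
    rcases hb.lt_or_gt with h | h
    · exact Or.inr ⟨h, Real.sign_of_neg h⟩
    · exact Or.inl ⟨h, Real.sign_of_pos h⟩
  set x : ℝ := σ * b / (2 * Real.sqrt τ) with hx_def
  set y : ℝ := σ * (Real.sqrt τ - a / (2 * Real.sqrt τ)) with hy_def
  set T : ℂ := (x:ℝ) + (y:ℝ) * Complex.I with hT_def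
  have hsτC : ((Real.sqrt τ : ℝ):ℂ) ≠ 0 := by exact_mod_cast hsτ.ne'
  have hssC : ((Real.sqrt τ : ℝ):ℂ) * ((Real.sqrt τ : ℝ):ℂ) = ((τ:ℝ):ℂ) := by
    exact_mod_cast congrArg (Complex.ofReal) hss
  have hTexpr : ((σ:ℝ) : ℂ) *
      (Complex.I * (Real.sqrt τ : ℂ)
        + (((b : ℝ) : ℂ) - Complex.I * (a : ℂ)) / (2 * (Real.sqrt τ : ℂ))) = T := by
    rw [hT_def, hx_def, hy_def]
    field_simp
    push_cast
    field_simp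
    ring
  have hz2 : z = ((a - τ : ℝ):ℂ) + ((b:ℝ):ℂ) * Complex.I := by
    rw [hz_def, hb_def, ha_def]
    apply Complex.ext <;> simp
  have hT2 : T * T = z + (((b:ℝ):ℂ) - Complex.I * (a:ℝ))^2 / (4 * (τ:ℝ)) := by
    rw [← hTexpr, hz2]
    rcases hσcases with ⟨hbp, hσ1⟩ | ⟨hbn, hσ1⟩ <;> rw [hσ1] <;> push_cast <;>
      rw [← hssC] <;> field_simp <;> ring_nf <;> simp only [Complex.I_sq] <;> ring
  have hkey : (s - T) * (s + T)
      = -((((b:ℝ):ℂ) - Complex.I * (a:ℝ))^2 / (4 * (τ:ℝ))) := by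
    have h : (s - T) * (s + T) = s * s - T * T := by ring
    rw [h, hs2, hT2]; ring
  have habsE : ‖(((b:ℝ):ℂ) - Complex.I * (a:ℝ))^2 / (4 * (τ:ℝ))‖
      = (a^2 + b^2) / (4*τ) := by
    rw [norm_div, norm_pow]
    have h1 : ‖((b:ℝ):ℂ) - Complex.I * (a:ℝ)‖^2 = a^2 + b^2 := by
      rw [Complex.sq_norm, Complex.normSq_apply]
      simp
      ring
    have h2 : ‖4 * ((τ:ℝ):ℂ)‖ = 4 * τ := by
      rw [norm_mul]
      simp [abs_of_pos hτ0]
    rw [h1, h2]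
  have hmul : ‖s - T‖ * ‖s + T‖ = (a^2 + b^2) / (4*τ) := by
    rw [← norm_mul, hkey, norm_neg, habsE]
  -- lower bound on |s + T|
  have haτ : a ≤ τ := le_trans (le_trans (le_abs_self a) haA) (by linarith)
  have hy2 : Real.sqrt τ / 2 ≤ Real.sqrt τ - a / (2 * Real.sqrt τ) := by
    have h1 : a / (2 * Real.sqrt τ) ≤ Real.sqrt τ / 2 := by
      rw [div_le_div_iff₀ (by positivity) (by positivity)]
      nlinarith [hss]
    linarith
  have hlow : Real.sqrt τ / 2 ≤ ‖s + T‖ := by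
    have hTim : (s + T).im = s.im + y := by simp [hT_def]
    rcases hσcases with ⟨hbp, hσ1⟩ | ⟨hbn, hσ1⟩
    · have hsim : 0 ≤ s.im := csqrt_im_nonneg (by rw [hzim]; exact hbp.le)
      have hy' : Real.sqrt τ / 2 ≤ y := by rw [hy_def, hσ1]; linarith
      calc Real.sqrt τ / 2 ≤ (s + T).im := by rw [hTim]; linarith
        _ ≤ |(s + T).im| := le_abs_self _
        _ ≤ ‖s + T‖ := Complex.abs_im_le_norm _
    · have hsim : s.im ≤ 0 := csqrt_im_nonpos (by rw [hzim]; exact hbn)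
      have hy' : y ≤ -(Real.sqrt τ / 2) := by rw [hy_def, hσ1]; linarith
      calc Real.sqrt τ / 2 ≤ -((s + T).im) := by rw [hTim]; linarith
        _ ≤ |(s + T).im| := neg_le_abs _
        _ ≤ ‖s + T‖ := Complex.abs_im_le_norm _
  have hpos : (0:ℝ) < ‖s + T‖ := lt_of_lt_of_le (by positivity) hlow
  have hsT : ‖s - T‖ = ((a^2+b^2)/(4*τ)) / ‖s + T‖ := by
    rw [eq_div_iff hpos.ne']; exact hmul
  have hst : ‖s - T‖ ≤ ((a^2+b^2)/(4*τ)) / (Real.sqrt τ / 2) := by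
    rw [hsT]
    gcongr
  have hab2 : a^2 + b^2 ≤ 2*A^2 := by
    have ha2 : a^2 ≤ A^2 := by
      rw [← sq_abs a]
      exact pow_le_pow_left₀ (abs_nonneg a) haA 2
    have hb2 : b^2 ≤ A^2 := by
      rw [← sq_abs b]
      exact pow_le_pow_left₀ (abs_nonneg b) hbA 2
    linarith
  have hrpow : (τ:ℝ) ^ ((-3:ℝ)/2) = 1 / (τ * Real.sqrt τ) := by
    rw [show ((-3:ℝ)/2) = -(3/2) by ring, Real.rpow_neg hτ0.le,
      show ((3:ℝ)/2) = 1 + 1/2 by ring, Real.rpow_add hτ0, Real.rpow_one,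
      ← Real.sqrt_eq_rpow]
    rw [one_div]
  have hfin : ((a^2+b^2)/(4*τ)) / (Real.sqrt τ / 2) ≤ A^2 * τ ^ ((-3:ℝ)/2) := by
    rw [hrpow, mul_one_div]
    have h4 : ((a^2+b^2)/(4*τ)) / (Real.sqrt τ / 2) = (a^2+b^2) / (2*(τ * Real.sqrt τ)) := by
      field_simp
      ring
    have h5 : A^2 / (τ * Real.sqrt τ) = 2*A^2 / (2*(τ * Real.sqrt τ)) :=
      (mul_div_mul_left _ _ two_ne_zero).symm
    rw [h4, h5]
    gcongr
  rw [hTexpr]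
  calc ‖s - T‖ ≤ ((a^2+b^2)/(4*τ)) / (Real.sqrt τ / 2) := hst
    _ ≤ A^2 * τ ^ ((-3:ℝ)/2) := hfin
end

section
/- Let W ∈ ℂ and let K ⊂ ℝ be a compact set. There exist constants C > 0 and M > 0 such that for all real τ ≥ M and all δ ∈ K with δ ≠ Im W, one has |Re √(W − τ − iδ) − |Im W − δ|/(2√τ)| ≤ C·|Im W − δ|·τ^(−3/2). In particular Re √(W − τ − iδ) = (|Im W − δ|/(2√τ))·(1 + O(1/τ)) uniformly for δ ∈ K ∖ {Im W}. -/
set_option maxHeartbeats 1000000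

private lemma arith1 (r t b : ℝ) (hr0 : 0 ≤ r) (ht : 0 ≤ t) (hr2 : r ^ 2 = t ^ 2 + b ^ 2) :
    t ≤ r := by nlinarith [sq_nonneg b]

private lemma arith2 (r t b B : ℝ) (hrt : t ≤ r) (ht1 : 1 ≤ t) (hr2 : r ^ 2 = t ^ 2 + b ^ 2)
    (hb2 : b ^ 2 ≤ B ^ 2) : r - t ≤ B ^ 2 / 2 := by nlinarith

private lemma arith3 (x d A B : ℝ) (hx0 : 0 ≤ x) (hx : x ≤ B ^ 2 / 2) (hd1 : d ≤ A)
    (hd2 : -A ≤ d) : |2 * x - 4 * d| ≤ 2 * B ^ 2 + 4 * A + 1 := by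
  rw [abs_le]; constructor <;> nlinarith [sq_nonneg B]

private lemma arith4 (a u v τ C : ℝ) (h2 : a * (2 * v) ≤ C) (huv : v ≤ u) (hv : 0 < v)
    (hC : 0 ≤ C) (hττ : v ^ 2 = τ) : a * (τ * v) ≤ C * (u * (2 * v)) := by
  have hτ0 : 0 ≤ τ := hττ ▸ sq_nonneg v
  have h3 : a * (2 * v) * τ ≤ C * τ := mul_le_mul_of_nonneg_right h2 hτ0
  have h4 : C * (v * v) ≤ C * (v * u) :=
    mul_le_mul_of_nonneg_left (mul_le_mul_of_nonneg_left huv hv.le) hC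
  have h6 : C * τ = C * (v * v) := by rw [← hττ]; ring
  have h5 : (0:ℝ) ≤ C * (v * u) := mul_nonneg hC (mul_nonneg hv.le (hv.le.trans huv))
  linarith

lemma csqrt_re (z : ℂ) : (csqrt z).re = Real.sqrt ((‖z‖ + z.re) / 2) := by
  rw [csqrt, show (1 / 2 : ℂ) = (2⁻¹ : ℂ) by norm_num, Complex.cpow_inv_two_re]

/-- Asymptotic expansion of `Re √(W − τ − iδ)` as `τ → +∞`, uniformly for `δ` in a
compact set `K` with `δ ≠ Im W`:
`Re √(W − τ − iδ) = (|Im W − δ|/(2√τ))·(1 + O(1/τ))`. -/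
theorem stmt2 (W : ℂ) (K : Set ℝ) (hK : IsCompact K) :
    ∃ C M : ℝ, 0 < C ∧ 0 < M ∧ ∀ τ : ℝ, M ≤ τ → ∀ δ ∈ K, δ ≠ W.im →
      |(csqrt (W - τ - Complex.I * δ)).re - |W.im - δ| / (2 * Real.sqrt τ)|
        ≤ C * |W.im - δ| * τ ^ ((-3 : ℝ) / 2) := by
  obtain ⟨A, hA0, hW1, hW2⟩ : ∃ A : ℝ, 0 ≤ A ∧ W.re ≤ A ∧ -A ≤ W.re :=
    ⟨|W.re|, abs_nonneg _, le_abs_self _, neg_abs_le _⟩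
  obtain ⟨B, hB1, hBK⟩ : ∃ B : ℝ, 1 ≤ B ∧ ∀ δ ∈ K, |W.im - δ| ≤ B := by
    obtain ⟨R, hR⟩ := hK.isBounded.subset_closedBall 0
    refine ⟨|W.im| + max R 0 + 1, by have := abs_nonneg W.im; have := le_max_right R (0:ℝ); linarith, fun δ hδ => ?_⟩
    have h1 : |δ| ≤ R := by simpa [Real.dist_eq] using hR hδ
    have h2 : |W.im - δ| ≤ |W.im| + |δ| := abs_sub _ _
    have h3 : R ≤ max R 0 := le_max_left _ _
    linarith
  refine ⟨2 * B ^ 2 + 4 * A + 1, 2 * A + 2, by positivity, by positivity, ?_⟩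
  intro τ hτ δ hδK hδ
  set C : ℝ := 2 * B ^ 2 + 4 * A + 1 with hCdef
  have hC : 0 < C := by positivity
  -- basic quantities
  set b : ℝ := W.im - δ with hbdef
  have hbB : |b| ≤ B := hBK δ hδK
  have hτ0 : (0:ℝ) < τ := lt_of_lt_of_le (by positivity) hτ
  have ht1 : (1:ℝ) ≤ τ - W.re := by linarith
  set t : ℝ := τ - W.re with htdef
  -- real and imaginary parts of z
  have hz_re : (W - (τ:ℂ) - Complex.I * (δ:ℂ)).re = W.re - τ := by simp
  have hz_im : (W - (τ:ℂ) - Complex.I * (δ:ℂ)).im = b := by simp [hbdef]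
  set r : ℝ := ‖W - (τ:ℂ) - Complex.I * (δ:ℂ)‖ with hrdef
  have hr0 : 0 ≤ r := norm_nonneg _
  have hr2 : r ^ 2 = t ^ 2 + b ^ 2 := by
    have h := Complex.sq_norm (W - (τ:ℂ) - Complex.I * (δ:ℂ))
    rw [Complex.normSq_apply, hz_re, hz_im] at h
    rw [← hrdef] at h
    rw [h, htdef]; ring
  have hrt : t ≤ r := arith1 r t b hr0 (by linarith) hr2
  have hb2 : b ^ 2 ≤ B ^ 2 := by
    rw [← sq_abs b]; exact pow_le_pow_left₀ (abs_nonneg b) hbB 2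
  have hrub : r - t ≤ B ^ 2 / 2 := arith2 r t b B hrt ht1 hr2 hb2
  set s : ℝ := 2 * (r + t) with hsdef
  have hs0 : 0 < s := by linarith
  have hsτ : 2 * τ ≤ s := by
    have : τ / 2 ≤ t := by rw [htdef]; linarith
    linarith
  set u : ℝ := Real.sqrt s with hudef
  set v : ℝ := Real.sqrt τ with hvdef
  have hv : 0 < v := Real.sqrt_pos.mpr hτ0
  have hu0 : 0 < u := Real.sqrt_pos.mpr hs0
  have hss : u ^ 2 = s := Real.sq_sqrt hs0.le
  have hττ : v ^ 2 = τ := Real.sq_sqrt hτ0.le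
  have huv : v ≤ u := Real.sqrt_le_sqrt (by linarith)
  -- rewrite the real part of the square root
  have hre : (csqrt (W - (τ:ℂ) - Complex.I * (δ:ℂ))).re = |b| / u := by
    rw [csqrt_re, ← hrdef, hz_re]
    have e1 : (r + (W.re - τ)) / 2 = b ^ 2 / s := by
      have hWt : W.re - τ = -t := by rw [htdef]; ring
      rw [hWt, div_eq_div_iff (by norm_num : (2:ℝ) ≠ 0) hs0.ne', hsdef]
      linear_combination 2 * hr2
    rw [e1, Real.sqrt_div (sq_nonneg b) s, Real.sqrt_sq_eq_abs, ← hudef]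
  rw [hre]
  -- rewrite the rpow
  have hrpow : τ ^ ((-3:ℝ)/2) = 1 / (τ * v) := by
    rw [show ((-3:ℝ)/2) = -(3/2) by norm_num, Real.rpow_neg hτ0.le,
      show ((3:ℝ)/2) = 1 + 1/2 by norm_num, Real.rpow_add hτ0, Real.rpow_one,
      ← Real.sqrt_eq_rpow, ← hvdef, one_div]
  rw [hrpow]
  -- bound |s - 4τ|
  have hsC : |s - 4 * τ| ≤ C := by
    have hdd : s - 4 * τ = 2 * (r - t) - 4 * W.re := by rw [hsdef, htdef]; ring
    rw [hdd, hCdef]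
    exact arith3 (r - t) W.re A B (by linarith) hrub hW1 hW2
  -- key product identity
  have hprod : (u - 2 * v) * (u + 2 * v) = s - 4 * τ := by linear_combination hss - 4 * hττ
  have heq : |u - 2 * v| * (u + 2 * v) = |s - 4 * τ| := by
    rw [← hprod, abs_mul, abs_of_nonneg (by positivity : (0:ℝ) ≤ u + 2 * v)]
  have h2 : |u - 2 * v| * (2 * v) ≤ C := by
    calc |u - 2 * v| * (2 * v) ≤ |u - 2 * v| * (u + 2 * v) := by
          apply mul_le_mul_of_nonneg_left (by linarith) (abs_nonneg _)
      _ = |s - 4 * τ| := heq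
      _ ≤ C := hsC
  -- key estimate
  have key : |1 / u - 1 / (2 * v)| ≤ C / (τ * v) := by
    have hd : 1 / u - 1 / (2 * v) = (2 * v - u) / (u * (2 * v)) := by
      field_simp
    rw [hd, abs_div, abs_of_pos (by positivity : (0:ℝ) < u * (2 * v)), abs_sub_comm,
      div_le_div_iff₀ (by positivity) (by positivity)]
    exact arith4 |u - 2 * v| u v τ C h2 huv hv hC.le hττ
  -- conclude
  calc |(|b| / u) - |b| / (2 * v)|
      = |b| * |1 / u - 1 / (2 * v)| := by
        rw [show |b| / u - |b| / (2 * v) = |b| * (1 / u - 1 / (2 * v)) by ring, abs_mul, abs_abs]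
    _ ≤ |b| * (C / (τ * v)) := mul_le_mul_of_nonneg_left key (abs_nonneg b)
    _ = C * |b| * (1 / (τ * v)) := by ring
end

section
/- Let V₊, V₋ ∈ ℂ and α ∈ ℂ with α ≠ 0, and set z(α) := (V₊ + V₋)/2 − (V₊ − V₋)²/(4α²) − α²/4. The following are equivalent: (a) √(V₊ − z(α)) = −α/2 − (V₊ − V₋)/(2α) and √(V₋ − z(α)) = −α/2 + (V₊ − V₋)/(2α) and z(α) ∉ [V₊,+∞) ∪ [V₋,+∞); (b) Re(−α/2 − (V₊ − V₋)/(2α)) > 0 and Re(−α/2 + (V₊ − V₋)/(2α)) > 0; (c) |Re(V₊ − V₋)·Re α + Im(V₊ − V₋)·Im α| < −|α|²·Re α. -/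
/-- `z(α) = (V₊ + V₋)/2 − (V₊ − V₋)²/(4α²) − α²/4`. -/
noncomputable def zalpha (Vp Vm α : ℂ) : ℂ :=
  (Vp + Vm) / 2 - (Vp - Vm) ^ 2 / (4 * α ^ 2) - α ^ 2 / 4

lemma csqrt_re_nonneg (z : ℂ) : 0 ≤ (csqrt z).re := by
  unfold csqrt
  rcases eq_or_ne z 0 with rfl | hz
  · simp [Complex.zero_cpow (by norm_num : (1/2:ℂ) ≠ 0)]
  · rw [Complex.cpow_def_of_ne_zero hz, Complex.exp_re]
    apply mul_nonneg (Real.exp_nonneg _)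
    have h1 : (Complex.log z * (1/2)).im = z.arg / 2 := by
      simp [Complex.mul_im, Complex.log_im]; ring
    rw [h1]
    apply Real.cos_nonneg_of_mem_Icc
    constructor
    · have := Complex.neg_pi_lt_arg z; linarith
    · have := Complex.arg_le_pi z; have := Real.pi_pos; linarith

lemma csqrt_sq (z : ℂ) : (csqrt z) ^ 2 = z := by
  have h := Complex.cpow_nat_inv_pow z (by norm_num : (2:ℕ) ≠ 0)
  unfold csqrt
  norm_num at h ⊢
  exact h

lemma csqrt_of_sq {w : ℂ} (hw : 0 < w.re) : csqrt (w ^ 2) = w := by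
  have h2 : (csqrt (w ^ 2)) ^ 2 = w ^ 2 := csqrt_sq _
  have h3 : (csqrt (w ^ 2) - w) * (csqrt (w ^ 2) + w) = 0 := by linear_combination h2
  rcases mul_eq_zero.1 h3 with h | h
  · exact sub_eq_zero.1 h
  · have hn : csqrt (w ^ 2) = -w := eq_neg_of_add_eq_zero_left h
    have h0 := csqrt_re_nonneg (w ^ 2)
    rw [hn] at h0
    simp at h0
    linarith

/-- Characterization of when `z(α)` is an eigenvalue of the complex point interaction
operator `𝓛_α`: the square-root identities together with `z(α)` off the rays are
equivalent to positivity of the real parts, which in turn is equivalent to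
`α ∈ Ω = {α : |⟨V₊ − V₋, α⟩_{ℝ²}| < −|α|²·Re α}`. -/
theorem stmt14 (Vp Vm α : ℂ) (hα : α ≠ 0) :
    ((csqrt (Vp - zalpha Vp Vm α) = -α / 2 - (Vp - Vm) / (2 * α) ∧
      csqrt (Vm - zalpha Vp Vm α) = -α / 2 + (Vp - Vm) / (2 * α) ∧
      (∀ t : ℝ, 0 ≤ t → zalpha Vp Vm α ≠ Vp + t) ∧
      (∀ t : ℝ, 0 ≤ t → zalpha Vp Vm α ≠ Vm + t))
    ↔ (0 < (-α / 2 - (Vp - Vm) / (2 * α)).re ∧ 0 < (-α / 2 + (Vp - Vm) / (2 * α)).re)) ∧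
    ((0 < (-α / 2 - (Vp - Vm) / (2 * α)).re ∧ 0 < (-α / 2 + (Vp - Vm) / (2 * α)).re)
    ↔ |(Vp - Vm).re * α.re + (Vp - Vm).im * α.im| < -(‖α‖ ^ 2 * α.re)) := by
  set wp : ℂ := -α / 2 - (Vp - Vm) / (2 * α) with hwp
  set wm : ℂ := -α / 2 + (Vp - Vm) / (2 * α) with hwm
  have hp2 : Vp - zalpha Vp Vm α = wp ^ 2 := by
    rw [hwp]; unfold zalpha; field_simp [hα]; ring
  have hm2 : Vm - zalpha Vp Vm α = wm ^ 2 := by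
    rw [hwm]; unfold zalpha; field_simp [hα]; ring
  constructor
  · constructor
    · rintro ⟨h1, h2, h3, h4⟩
      have hrp : 0 ≤ wp.re := by rw [← h1]; exact csqrt_re_nonneg _
      have hrm : 0 ≤ wm.re := by rw [← h2]; exact csqrt_re_nonneg _
      constructor
      · rcases hrp.lt_or_eq with h | h
        · exact h
        · exfalso
          have hw : wp = (wp.im : ℂ) * Complex.I := by
            apply Complex.ext <;> simp [← h]
          have hsq : wp ^ 2 = -((wp.im ^ 2 : ℝ) : ℂ) := by
            rw [hw]; push_cast; ring_nf; simp [Complex.I_sq]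
          have hz : zalpha Vp Vm α = Vp + ((wp.im ^ 2 : ℝ) : ℂ) := by
            linear_combination -hp2 - hsq
          exact h3 (wp.im ^ 2) (sq_nonneg _) hz
      · rcases hrm.lt_or_eq with h | h
        · exact h
        · exfalso
          have hw : wm = (wm.im : ℂ) * Complex.I := by
            apply Complex.ext <;> simp [← h]
          have hsq : wm ^ 2 = -((wm.im ^ 2 : ℝ) : ℂ) := by
            rw [hw]; push_cast; ring_nf; simp [Complex.I_sq]
          have hz : zalpha Vp Vm α = Vm + ((wm.im ^ 2 : ℝ) : ℂ) := by
            linear_combination -hm2 - hsq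
          exact h4 (wm.im ^ 2) (sq_nonneg _) hz
    · rintro ⟨hp, hm⟩
      refine ⟨by rw [hp2]; exact csqrt_of_sq hp, by rw [hm2]; exact csqrt_of_sq hm, ?_, ?_⟩
      · intro t ht hz
        have h : wp ^ 2 = -(t : ℂ) := by rw [← hp2, hz]; ring
        have hre : wp.re ^ 2 - wp.im ^ 2 = -t := by
          have := congrArg Complex.re h
          simpa [pow_two, Complex.mul_re] using this
        have him : 2 * wp.re * wp.im = 0 := by
          have := congrArg Complex.im h
          simp [pow_two, Complex.mul_im] at this
          linarith
        have : wp.im = 0 := by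
          rcases mul_eq_zero.1 him with h' | h'
          · rcases mul_eq_zero.1 h' with h'' | h''
            · norm_num at h''
            · linarith
          · exact h'
        nlinarith
      · intro t ht hz
        have h : wm ^ 2 = -(t : ℂ) := by rw [← hm2, hz]; ring
        have hre : wm.re ^ 2 - wm.im ^ 2 = -t := by
          have := congrArg Complex.re h
          simpa [pow_two, Complex.mul_re] using this
        have him : 2 * wm.re * wm.im = 0 := by
          have := congrArg Complex.im h
          simp [pow_two, Complex.mul_im] at this
          linarith
        have : wm.im = 0 := by
          rcases mul_eq_zero.1 him with h' | h'
          · rcases mul_eq_zero.1 h' with h'' | h''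
            · norm_num at h''
            · linarith
          · exact h'
        nlinarith
  · have hA : 0 < Complex.normSq α := Complex.normSq_pos.2 hα
    set S := (Vp - Vm).re * α.re + (Vp - Vm).im * α.im with hS
    set A := Complex.normSq α with hAdef
    have h2A : (0:ℝ) < 2 * A := by linarith
    have habs : ‖α‖ ^ 2 = A := Complex.sq_norm α
    have key : ((Vp - Vm) / (2 * α)).re = S / (2 * A) := by
      have h1 : Complex.normSq (2 * α) = 4 * A := by
        rw [hAdef, Complex.normSq_mul]
        norm_num [Complex.normSq_ofNat]
      rw [Complex.div_re, h1]
      simp only [Complex.mul_re, Complex.mul_im, Complex.re_ofNat, Complex.im_ofNat, hS]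
      field_simp
      ring
    have hneg : ((-α / 2 : ℂ)).re = -α.re / 2 := by
      simp [Complex.div_re, Complex.normSq_apply, Complex.neg_re]
    have hre_p : wp.re = -α.re / 2 - S / (2 * A) := by
      rw [hwp, Complex.sub_re, key, hneg]
    have hre_m : wm.re = -α.re / 2 + S / (2 * A) := by
      rw [hwm, Complex.add_re, key, hneg]
    have e1 : (0 < -α.re / 2 - S / (2 * A)) ↔ S < -(A * α.re) := by
      rw [sub_pos, div_lt_iff₀ h2A, show -α.re / 2 * (2 * A) = -(A * α.re) by ring]
    have e2 : (0 < -α.re / 2 + S / (2 * A)) ↔ -(-(A * α.re)) < S := by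
      rw [show (0 < -α.re / 2 + S / (2 * A)) ↔ α.re / 2 < S / (2 * A) from by
            constructor <;> intro h <;> linarith,
          lt_div_iff₀ h2A, show α.re / 2 * (2 * A) = -(-(A * α.re)) by ring]
    rw [hre_p, hre_m, habs, abs_lt, e1, e2]
    exact and_comm
end

section
/- Let V₊, V₋ ∈ ℂ and α ∈ ℂ, and set C_{V,α} := min(Re V₊, Re V₋) − max(|Im V₊|, |Im V₋|) − (|Re α| + |Im α|)². For every continuously differentiable, compactly supported u : ℝ → ℂ with ∫_ℝ |u(x)|² dx = 1, the complex number q := ∫_ℝ |u'(x)|² dx + V₊·∫_0^∞ |u(x)|² dx + V₋·∫_{−∞}^0 |u(x)|² dx + α·|u(0)|² satisfies |Im q| ≤ Re q − C_{V,α}. (Consequently the numerical range of the complex point interaction operator 𝓛_α = −d²/dx² + V + α·δ₀ is contained in the sector with vertex C_{V,α} and half-angle π/4.) -/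
open MeasureTheory

/-- The numerical range of the complex point interaction operator
`𝓛_α = −d²/dx² + V + α·δ₀` is contained in the sector with vertex
`C_{V,α} = min(Re V₊, Re V₋) − max(|Im V₊|, |Im V₋|) − (|Re α| + |Im α|)²`
and half-angle `π/4`: for every normalized `C¹` compactly supported `u`, the value
`q = ∫|u'|² + V₊∫_{x>0}|u|² + V₋∫_{x<0}|u|² + α|u(0)|²` satisfies
`|Im q| ≤ Re q − C_{V,α}`. -/
theorem stmt19 (Vp Vm α : ℂ) (u u' : ℝ → ℂ)
    (hderiv : ∀ x : ℝ, HasDerivAt u (u' x) x)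
    (hcont : Continuous u')
    (hsupp : HasCompactSupport u)
    (hnorm : (∫ x : ℝ, ‖u x‖ ^ 2) = 1) :
    ∀ q : ℂ,
      q = ((∫ x : ℝ, ‖u' x‖ ^ 2 : ℝ) : ℂ)
          + Vp * ((∫ x in Set.Ioi (0 : ℝ), ‖u x‖ ^ 2 : ℝ) : ℂ)
          + Vm * ((∫ x in Set.Iio (0 : ℝ), ‖u x‖ ^ 2 : ℝ) : ℂ)
          + α * ((‖u 0‖ ^ 2 : ℝ) : ℂ) →
      |q.im| ≤ q.re - (min Vp.re Vm.re - max |Vp.im| |Vm.im| - (|α.re| + |α.im|) ^ 2) := by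
  have hu_cont : Continuous u :=
    continuous_iff_continuousAt.2 fun x => (hderiv x).continuousAt
  have hderiv_eq : deriv u = u' := funext fun x => (hderiv x).deriv
  have hsupp' : HasCompactSupport u' := hderiv_eq ▸ hsupp.deriv
  have hu2supp : HasCompactSupport (fun x => ‖u x‖ ^ 2) :=
    hsupp.comp_left (g := fun z : ℂ => ‖z‖ ^ 2) (by simp)
  have hu'2supp : HasCompactSupport (fun x => ‖u' x‖ ^ 2) :=
    hsupp'.comp_left (g := fun z : ℂ => ‖z‖ ^ 2) (by simp)
  have hu2int : Integrable (fun x => ‖u x‖ ^ 2) :=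
    (hu_cont.norm.pow 2).integrable_of_hasCompactSupport hu2supp
  have hu'2int : Integrable (fun x => ‖u' x‖ ^ 2) :=
    (hcont.norm.pow 2).integrable_of_hasCompactSupport hu'2supp
  set D : ℝ := (∫ x : ℝ, ‖u' x‖ ^ 2 : ℝ) with hD_def
  set P : ℝ := (∫ x in Set.Ioi (0 : ℝ), ‖u x‖ ^ 2 : ℝ) with hP_def
  set M : ℝ := (∫ x in Set.Iio (0 : ℝ), ‖u x‖ ^ 2 : ℝ) with hM_def
  set s : ℝ := ‖u 0‖ ^ 2 with hs_def
  have hD0 : 0 ≤ D := integral_nonneg fun x => by positivity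
  have hP0 : 0 ≤ P := integral_nonneg fun x => by positivity
  have hM0 : 0 ≤ M := integral_nonneg fun x => by positivity
  have hs0 : 0 ≤ s := by positivity
  have hPM : P + M = 1 := by
    rw [hP_def, hM_def, ← hnorm, add_comm,
      ← integral_Iic_eq_integral_Iio (f := fun x => ‖u x‖ ^ 2) (x := (0:ℝ)),
      intervalIntegral.integral_Iic_add_Ioi (hu2int.integrableOn) (hu2int.integrableOn)]
  -- derivative of ‖u x‖^2
  set g' : ℝ → ℝ := fun x =>
    2 * ((u x).re * (u' x).re + (u x).im * (u' x).im) with hg'_def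
  have hg : ∀ x : ℝ, HasDerivAt (fun x => ‖u x‖ ^ 2) (g' x) x := by
    intro x
    have hre : HasDerivAt (fun x => (u x).re) ((u' x).re) x :=
      (Complex.reCLM.hasFDerivAt.comp_hasDerivAt x (hderiv x))
    have him : HasDerivAt (fun x => (u x).im) ((u' x).im) x :=
      (Complex.imCLM.hasFDerivAt.comp_hasDerivAt x (hderiv x))
    have : HasDerivAt (fun x => (u x).re ^ 2 + (u x).im ^ 2)
        (2 * (u x).re * (u' x).re + 2 * (u x).im * (u' x).im) x := by
      have h1 := hre.pow 2
      have h2 := him.pow 2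
      exact (h1.add h2).congr_deriv (by norm_num)
    have heq : (fun x => ‖u x‖ ^ 2) = fun x => (u x).re ^ 2 + (u x).im ^ 2 := by
      funext y
      rw [← Complex.normSq_eq_norm_sq, Complex.normSq_apply]; ring
    rw [heq]
    convert this using 1
    ring
  have hg'_cont : Continuous g' := by
    fun_prop
  have hg'supp : HasCompactSupport g' := by
    apply HasCompactSupport.intro (hsupp.isCompact)
    intro x hx
    have hux : u x = 0 := image_eq_zero_of_notMem_tsupport hx
    simp [hg'_def, hux]
  have hg'int : Integrable g' := hg'_cont.integrable_of_hasCompactSupport hg'supp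
  -- limit at infinity
  have htend : Filter.Tendsto (fun x => ‖u x‖ ^ 2) Filter.atTop (nhds 0) := by
    have : ∀ᶠ x in Filter.atTop, ‖u x‖ ^ 2 = 0 := by
      obtain ⟨R, hR⟩ := hsupp.isCompact.bddAbove
      filter_upwards [Filter.eventually_gt_atTop R] with x hx
      have : u x = 0 := image_eq_zero_of_notMem_tsupport (fun h => absurd (hR h) (not_le.2 hx))
      simp [this]
    exact Filter.Tendsto.congr' (this.mono fun x hx => hx.symm) tendsto_const_nhds
  have hFTC : ∫ x in Set.Ioi (0:ℝ), g' x = 0 - ‖u 0‖ ^ 2 :=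
    MeasureTheory.integral_Ioi_of_hasDerivAt_of_tendsto
      ((hg 0).continuousAt.continuousWithinAt) (fun x _ => hg x)
      hg'int.integrableOn htend
  -- key bound: for every t > 0, s ≤ t * D + (1/t)
  have hkey : ∀ t : ℝ, 0 < t → s ≤ t * D + 1 / t := by
    intro t ht
    have hbound : ∀ x : ℝ, -g' x ≤ t * ‖u' x‖ ^ 2 + (1/t) * ‖u x‖ ^ 2 := by
      intro x
      have h1 : ‖u x‖ ^ 2 = (u x).re ^ 2 + (u x).im ^ 2 := by
        rw [← Complex.normSq_eq_norm_sq, Complex.normSq_apply]; ring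
      have h2 : ‖u' x‖ ^ 2 = (u' x).re ^ 2 + (u' x).im ^ 2 := by
        rw [← Complex.normSq_eq_norm_sq, Complex.normSq_apply]; ring
      rw [h1, h2, hg'_def]
      have e1 := sq_nonneg (t * (u' x).re + (u x).re)
      have e2 := sq_nonneg (t * (u' x).im + (u x).im)
      have ht' : 0 < t * t := mul_pos ht ht
      rw [div_eq_inv_mul, ← mul_le_mul_iff_right₀ ht]
      have hti : t * (t⁻¹ * 1 * ((u x).re ^ 2 + (u x).im ^ 2))
          = (u x).re ^ 2 + (u x).im ^ 2 := by
        field_simp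
      nlinarith [sq_nonneg (t * (u' x).re + (u x).re), sq_nonneg (t * (u' x).im + (u x).im)]
    have hbint : Integrable (fun x => t * ‖u' x‖ ^ 2 + (1/t) * ‖u x‖ ^ 2) :=
      (hu'2int.const_mul t).add (hu2int.const_mul (1/t))
    have hmono : ∫ x in Set.Ioi (0:ℝ), -g' x
        ≤ ∫ x in Set.Ioi (0:ℝ), (t * ‖u' x‖ ^ 2 + (1/t) * ‖u x‖ ^ 2) :=
      setIntegral_mono hg'int.neg.integrableOn hbint.integrableOn hbound
    have e1 : ∫ x in Set.Ioi (0:ℝ), -g' x = s := by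
      rw [integral_neg, hFTC]; simp [hs_def]
    have e2 : ∫ x in Set.Ioi (0:ℝ), (t * ‖u' x‖ ^ 2 + (1/t) * ‖u x‖ ^ 2)
        ≤ t * D + 1 / t := by
      rw [integral_add ((hu'2int.const_mul t).integrableOn) ((hu2int.const_mul (1/t)).integrableOn),
        integral_const_mul, integral_const_mul]
      have b1 : ∫ x in Set.Ioi (0:ℝ), ‖u' x‖ ^ 2 ≤ D :=
        setIntegral_le_integral hu'2int (Filter.Eventually.of_forall fun x => by positivity)
      have b2 : ∫ x in Set.Ioi (0:ℝ), ‖u x‖ ^ 2 ≤ 1 := by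
        rw [← hnorm]
        exact setIntegral_le_integral hu2int (Filter.Eventually.of_forall fun x => by positivity)
      have ht1 : (0:ℝ) ≤ 1/t := by positivity
      have := add_le_add (mul_le_mul_of_nonneg_left b1 ht.le)
        (mul_le_mul_of_nonneg_left b2 ht1)
      linarith
    linarith [e1 ▸ hmono, e2]
  -- the arithmetic conclusion
  set a : ℝ := |α.re| + |α.im| with ha_def
  have ha0 : 0 ≤ a := by positivity
  have hmain : a * s ≤ D + a ^ 2 := by
    rcases eq_or_lt_of_le ha0 with h | h
    · rw [← h]; simpa using hD0
    · have := hkey (1/a) (by positivity)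
      have h1 : a * s ≤ a * ((1/a) * D + 1 / (1/a)) :=
        mul_le_mul_of_nonneg_left this (le_of_lt h)
      calc a * s ≤ a * ((1/a) * D + 1 / (1/a)) := h1
        _ = D + a ^ 2 := by field_simp
  intro q hq
  subst hq
  simp only [Complex.add_re, Complex.add_im, Complex.mul_re, Complex.mul_im,
    Complex.ofReal_re, Complex.ofReal_im, mul_zero, zero_mul, sub_zero, add_zero, zero_add,
    mul_one]
  have habs : |Vp.im * P + Vm.im * M + α.im * s|
      ≤ |Vp.im| * P + |Vm.im| * M + |α.im| * s := by
    calc |Vp.im * P + Vm.im * M + α.im * s|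
        ≤ |Vp.im * P + Vm.im * M| + |α.im * s| := abs_add_le _ _
      _ ≤ |Vp.im * P| + |Vm.im * M| + |α.im * s| := by linarith [abs_add_le (Vp.im * P) (Vm.im * M)]
      _ = |Vp.im| * P + |Vm.im| * M + |α.im| * s := by
          rw [abs_mul, abs_mul, abs_mul, abs_of_nonneg hP0, abs_of_nonneg hM0, abs_of_nonneg hs0]
  have hmx1 : |Vp.im| ≤ max |Vp.im| |Vm.im| := le_max_left _ _
  have hmx2 : |Vm.im| ≤ max |Vp.im| |Vm.im| := le_max_right _ _
  have hmn1 : min Vp.re Vm.re ≤ Vp.re := min_le_left _ _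
  have hmn2 : min Vp.re Vm.re ≤ Vm.re := min_le_right _ _
  have har : -α.re ≤ |α.re| := neg_le_abs _
  have hminPM : min Vp.re Vm.re * P + min Vp.re Vm.re * M = min Vp.re Vm.re := by
    have : min Vp.re Vm.re * (P + M) = min Vp.re Vm.re * 1 := by rw [hPM]
    linarith [this]
  have hmaxPM : max |Vp.im| |Vm.im| * P + max |Vp.im| |Vm.im| * M = max |Vp.im| |Vm.im| := by
    have : max |Vp.im| |Vm.im| * (P + M) = max |Vp.im| |Vm.im| * 1 := by rw [hPM]
    linarith [this]
  have heqs : |α.im| * s + |α.re| * s = a * s := by rw [ha_def]; ring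
  linarith [mul_le_mul_of_nonneg_right hmx1 hP0, mul_le_mul_of_nonneg_right hmx2 hM0,
    mul_le_mul_of_nonneg_right hmn1 hP0, mul_le_mul_of_nonneg_right hmn2 hM0,
    mul_le_mul_of_nonneg_right har hs0]
end
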